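/- Let Σ be a d×d positive definite matrix, μ ∈ ℝ^d, and w ∈ ℝ^d with w ≠ 0. Then the set of one-dimensional distributions of wᵀX, as the joint distribution of X ranges over all symmetric d-dimensional distributions with mean vector μ and covariance matrix Σ, equals exactly the set of all symmetric one-dimensional distributions with mean wᵀμ and variance wᵀΣw. -/

import Mathlib

open MeasureTheory
open scoped ENNReal NNReal

namespace Stmt14Aux

lemma map_finset_sum {α β ι : Type*} [MeasurableSpace α] [MeasurableSpace β]
    (s : Finset ι) (μ : ι → Measure α) {f : α → β} (hf : Measurable f) :
    Measure.map f (∑ i ∈ s, μ i) = ∑ i ∈ s, Measure.map f (μ i) := by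
  ext A hA
  rw [Measure.map_apply hf hA, Measure.finset_sum_apply, Measure.finset_sum_apply]
  exact Finset.sum_congr rfl fun i _ => (Measure.map_apply hf hA).symm

lemma integrable_id_of_sq {F : Measure ℝ} [IsProbabilityMeasure F]
    (h : Integrable (fun x => x ^ 2) F) : Integrable (fun x : ℝ => x) F := by
  refine (h.add (integrable_const 1)).mono measurable_id.aestronglyMeasurable ?_
  filter_upwards with x
  rw [Real.norm_eq_abs, Real.norm_eq_abs]
  have h1 : |x| ≤ x ^ 2 + 1 := by nlinarith [sq_abs x, abs_nonneg x, sq_nonneg (|x| - 1)]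
  exact h1.trans (le_abs_self _)

lemma center_eq_mean {F : Measure ℝ} [IsProbabilityMeasure F]
    (hInt : Integrable (fun x : ℝ => x) F) {a : ℝ}
    (h : Measure.map (fun x => 2 * a - x) F = F) : a = ∫ x, x ∂F := by
  have hm : Measurable fun x : ℝ => 2 * a - x := by fun_prop
  have h2 : ∫ x, x ∂F = ∫ x, (2 * a - x) ∂F := by
    conv_lhs => rw [← h]
    rw [integral_map (f := fun x : ℝ => x) hm.aemeasurable
      (Measurable.aestronglyMeasurable (by fun_prop))]
  rw [integral_sub (integrable_const _) hInt, integral_const, probReal_univ] at h2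
  simp only [ENNReal.toReal_one, smul_eq_mul, one_mul] at h2
  linarith


def sgn (b : Bool) : ℝ := cond b 1 (-1)

@[simp] lemma sgn_true : sgn true = 1 := rfl

@[simp] lemma sgn_false : sgn false = -1 := rfl

noncomputable def Tmap {d : ℕ} (B : Matrix (Fin d) (Fin d) ℝ) (vv μv : Fin d → ℝ) (m : ℝ)
    (p : Fin d × Bool) (y : ℝ) : Fin d → ℝ :=
  fun i => sgn p.2 * Real.sqrt d * B p.1 i + (y - m) * vv i + μv i

lemma measurable_Tmap {d : ℕ} (B : Matrix (Fin d) (Fin d) ℝ) (vv μv : Fin d → ℝ) (m : ℝ)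
    (p : Fin d × Bool) : Measurable (Tmap B vv μv m p) :=
  measurable_pi_lambda _ fun i => by unfold Tmap; fun_prop

lemma dot_symm {n : Type*} [Fintype n] {A : Matrix n n ℝ} (hA : ∀ i j, A i j = A j i)
    (x y : n → ℝ) : dotProduct x (A.mulVec y) = dotProduct y (A.mulVec x) := by
  simp only [dotProduct, Matrix.mulVec, Finset.mul_sum]
  rw [Finset.sum_comm]
  exact Finset.sum_congr rfl fun j _ => Finset.sum_congr rfl fun i _ => by rw [hA i j]; ring

open scoped MatrixOrder in
lemma exists_sqrt_psd {d : ℕ} (M : Matrix (Fin d) (Fin d) ℝ) (h : M.PosSemidef) :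
    ∃ B : Matrix (Fin d) (Fin d) ℝ, B.PosSemidef ∧ B * B = M :=
  ⟨CFC.sqrt M, Matrix.nonneg_iff_posSemidef.mp (CFC.sqrt_nonneg M),
    CFC.sqrt_mul_sqrt_self M h.nonneg⟩

end Stmt14Aux


open Stmt14Aux

theorem stmt_14 (d : ℕ) (μ : Fin d → ℝ) (C : Matrix (Fin d) (Fin d) ℝ) (hC : C.PosDef)
    (w : Fin d → ℝ) (hw : w ≠ 0) :
    {F : Measure ℝ | ∃ G : Measure (Fin d → ℝ), IsProbabilityMeasure G ∧
        Integrable (fun x => ∑ i, (x i) ^ 2) G ∧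
        (∃ a : Fin d → ℝ, Measure.map (fun x => (2 : ℝ) • a - x) G = G) ∧
        (∀ i, (∫ x, x i ∂G) = μ i) ∧
        (∀ i j, (∫ x, (x i - μ i) * (x j - μ j) ∂G) = C i j) ∧
        F = Measure.map (fun x => ∑ i, w i * x i) G}
    = {F : Measure ℝ | IsProbabilityMeasure F ∧ Integrable (fun x => x ^ 2) F ∧
        (∃ a : ℝ, Measure.map (fun x => 2 * a - x) F = F) ∧
        (∫ x, x ∂F) = ∑ i, w i * μ i ∧
        (∫ x, (x - ∑ i, w i * μ i) ^ 2 ∂F) = dotProduct w (C.mulVec w)} := by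
  ext F
  simp only [Set.mem_setOf_eq]
  constructor
  · rintro ⟨G, hGp, hGint, ⟨a, ha⟩, hmean, hcov, rfl⟩
    have hL : Measurable fun x : Fin d → ℝ => ∑ i, w i * x i := by fun_prop
    have hx2 : ∀ i, Integrable (fun x : Fin d → ℝ => (x i) ^ 2) G := by
      intro i
      refine hGint.mono ((measurable_pi_apply i).pow_const 2).aestronglyMeasurable ?_
      filter_upwards with x
      rw [Real.norm_eq_abs, Real.norm_eq_abs, abs_of_nonneg (sq_nonneg _),
        abs_of_nonneg (Finset.sum_nonneg fun j _ => sq_nonneg (x j))]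
      exact Finset.single_le_sum (fun j _ => sq_nonneg (x j)) (Finset.mem_univ i)
    have hx1 : ∀ i, Integrable (fun x : Fin d → ℝ => x i) G := by
      intro i
      refine ((hx2 i).add (integrable_const 1)).mono
        (measurable_pi_apply i).aestronglyMeasurable ?_
      filter_upwards with x
      rw [Real.norm_eq_abs, Real.norm_eq_abs]
      have h1 : |x i| ≤ (x i) ^ 2 + 1 := by
        nlinarith [sq_abs (x i), abs_nonneg (x i), sq_nonneg (|x i| - 1)]
      exact h1.trans (le_abs_self _)
    have hcent : ∀ i, Integrable (fun x : Fin d → ℝ => (x i - μ i) ^ 2) G := by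
      intro i
      have e : (fun x : Fin d → ℝ => (x i - μ i) ^ 2)
          = fun x => (x i) ^ 2 + ((-2 * μ i) * x i + (μ i) ^ 2) := by
        funext x; ring
      rw [e]
      exact (hx2 i).add (((hx1 i).const_mul _).add (integrable_const _))
    have hprod : ∀ i j, Integrable (fun x : Fin d → ℝ => (x i - μ i) * (x j - μ j)) G := by
      intro i j
      refine ((hcent i).add (hcent j)).mono
        (((measurable_pi_apply i).sub measurable_const).mul
          ((measurable_pi_apply j).sub measurable_const)).aestronglyMeasurable ?_
      filter_upwards with x
      rw [Real.norm_eq_abs, Real.norm_eq_abs, abs_mul]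
      have h1 : |x i - μ i| * |x j - μ j| ≤ (x i - μ i) ^ 2 + (x j - μ j) ^ 2 := by
        nlinarith [sq_abs (x i - μ i), sq_abs (x j - μ j), abs_nonneg (x i - μ i),
          abs_nonneg (x j - μ j), sq_nonneg (|x i - μ i| - |x j - μ j|)]
      exact h1.trans (le_abs_self _)
    haveI : IsProbabilityMeasure (Measure.map (fun x : Fin d → ℝ => ∑ i, w i * x i) G) :=
      Measure.isProbabilityMeasure_map hL.aemeasurable
    refine ⟨inferInstance, ?_, ?_, ?_, ?_⟩
    · have hsm : AEStronglyMeasurable (fun x : ℝ => x ^ 2)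
          (Measure.map (fun x : Fin d → ℝ => ∑ i, w i * x i) G) :=
        Measurable.aestronglyMeasurable (by fun_prop)
      rw [integrable_map_measure hsm hL.aemeasurable]
      have hdom : Integrable (fun x : Fin d → ℝ => (∑ i, (w i) ^ 2) * ∑ i, (x i) ^ 2) G :=
        hGint.const_mul _
      refine hdom.mono ((hL.pow_const 2).comp measurable_id).aestronglyMeasurable ?_
      filter_upwards with x
      simp only [Function.comp_apply]
      rw [Real.norm_eq_abs, Real.norm_eq_abs, abs_of_nonneg (sq_nonneg _)]
      have h1 : (∑ i, w i * x i) ^ 2 ≤ (∑ i, (w i) ^ 2) * ∑ i, (x i) ^ 2 :=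
        Finset.sum_mul_sq_le_sq_mul_sq Finset.univ w x
      exact h1.trans (le_abs_self _)
    · refine ⟨∑ i, w i * a i, ?_⟩
      have hσ : Measurable fun t : ℝ => 2 * (∑ i, w i * a i) - t := by fun_prop
      have hR : Measurable fun x : Fin d → ℝ => (2 : ℝ) • a - x := by fun_prop
      rw [Measure.map_map hσ hL]
      have hcomp : ((fun t : ℝ => 2 * (∑ i, w i * a i) - t) ∘ fun x : Fin d → ℝ => ∑ i, w i * x i)
          = (fun x : Fin d → ℝ => ∑ i, w i * x i) ∘ (fun x => (2 : ℝ) • a - x) := by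
        funext x
        simp only [Function.comp_apply, Pi.sub_apply, Pi.smul_apply, smul_eq_mul]
        rw [Finset.mul_sum, ← Finset.sum_sub_distrib]
        exact Finset.sum_congr rfl fun i _ => by ring
      rw [hcomp, ← Measure.map_map hL hR, ha]
    · rw [integral_map (f := fun x : ℝ => x) hL.aemeasurable
        (Measurable.aestronglyMeasurable (by fun_prop))]
      rw [integral_finset_sum _ (fun i _ => (hx1 i).const_mul (w i))]
      exact Finset.sum_congr rfl fun i _ => by rw [integral_const_mul, hmean i]
    · rw [integral_map (f := fun x : ℝ => (x - ∑ i, w i * μ i) ^ 2) hL.aemeasurable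
        (Measurable.aestronglyMeasurable (by fun_prop))]
      have e : ∀ x : Fin d → ℝ, ((∑ i, w i * x i) - ∑ i, w i * μ i) ^ 2
          = ∑ i, ∑ j, (w i * w j) * ((x i - μ i) * (x j - μ j)) := by
        intro x
        rw [← Finset.sum_sub_distrib]
        have e1 : ∑ i, (w i * x i - w i * μ i) = ∑ i, w i * (x i - μ i) :=
          Finset.sum_congr rfl fun i _ => by ring
        rw [e1, sq, Finset.sum_mul_sum]
        exact Finset.sum_congr rfl fun i _ => Finset.sum_congr rfl fun j _ => by ring
      simp_rw [e]
      rw [integral_finset_sum _ (fun i _ =>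
        integrable_finset_sum _ (fun j _ => (hprod i j).const_mul _))]
      have e2 : ∀ i, ∫ x, ∑ j, (w i * w j) * ((x i - μ i) * (x j - μ j)) ∂G
          = ∑ j, w i * w j * C i j := by
        intro i
        rw [integral_finset_sum _ (fun j _ => (hprod i j).const_mul _)]
        exact Finset.sum_congr rfl fun j _ => by rw [integral_const_mul, hcov i j]
      rw [Finset.sum_congr rfl fun i _ => e2 i]
      simp only [dotProduct, Matrix.mulVec, Finset.mul_sum]
      exact Finset.sum_congr rfl fun i _ => Finset.sum_congr rfl fun j _ => by ring
  · rintro ⟨hFp, hFint2, ⟨a₀, ha₀⟩, hFmean, hFvar⟩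
    haveI := hFp
    have hd : 0 < d := by
      refine Nat.pos_of_ne_zero fun h => hw ?_
      subst h
      funext i
      exact i.elim0
    have hdR : (0:ℝ) < (d:ℝ) := by exact_mod_cast hd
    have hF1 : Integrable (fun x : ℝ => x) F := integrable_id_of_sq hFint2
    set m : ℝ := ∑ i, w i * μ i with hmdef
    set c : ℝ := dotProduct w (C.mulVec w) with hcdef
    have hc0 : 0 < c := by
      have := hC.dotProduct_mulVec_pos hw
      simpa [hcdef] using this
    have ham : a₀ = m := (center_eq_mean hF1 ha₀).trans hFmean
    have hFsym : Measure.map (fun y : ℝ => 2 * m - y) F = F := by rw [← ham]; exact ha₀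
    have hCe : ∀ i j, C i j = C j i := fun i j => by
      have := hC.1.apply i j
      simpa using this.symm
    set Cw : Fin d → ℝ := C.mulVec w with hCwdef
    set M : Matrix (Fin d) (Fin d) ℝ := C - c⁻¹ • Matrix.vecMulVec Cw Cw with hMdef
    have hMe : ∀ i j, M i j = C i j - c⁻¹ * (Cw i * Cw j) := by
      intro i j
      simp [hMdef, Matrix.sub_apply, Matrix.smul_apply, Matrix.vecMulVec_apply, smul_eq_mul]
    have hstar : ∀ x : Fin d → ℝ, star x = x := fun x => funext fun i => rfl
    have hMquad : ∀ y : Fin d → ℝ, dotProduct y (M.mulVec y)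
        = dotProduct y (C.mulVec y) - c⁻¹ * (dotProduct y Cw) ^ 2 := by
      intro y
      have hvv : dotProduct y ((Matrix.vecMulVec Cw Cw).mulVec y)
          = (dotProduct y Cw) ^ 2 := by
        simp only [dotProduct, Matrix.mulVec, Matrix.vecMulVec_apply]
        rw [sq, Finset.sum_mul_sum]
        rw [Finset.sum_congr rfl fun i _ => (Finset.mul_sum _ _ _)]
        exact Finset.sum_congr rfl fun i _ => Finset.sum_congr rfl fun j _ => by ring
      rw [hMdef, Matrix.sub_mulVec, dotProduct_sub, Matrix.smul_mulVec,
        dotProduct_smul, smul_eq_mul, hvv]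
    have hCS : ∀ y : Fin d → ℝ, (dotProduct y Cw) ^ 2
        ≤ dotProduct y (C.mulVec y) * c := by
      intro y
      have hq : ∀ t : ℝ, 0 ≤ c * (t * t) + (2 * dotProduct y Cw) * t
          + dotProduct y (C.mulVec y) := by
        intro t
        have h0 := hC.posSemidef.dotProduct_mulVec_nonneg (y + t • w)
        rw [hstar] at h0
        simp only [Matrix.mulVec_add, Matrix.mulVec_smul, dotProduct_add,
          add_dotProduct, smul_dotProduct, dotProduct_smul,
          smul_eq_mul] at h0
        have hby : dotProduct w (C.mulVec y) = dotProduct y Cw := by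
          rw [hCwdef]; exact dot_symm hCe w y
        rw [hby] at h0
        rw [← hCwdef] at h0
        nlinarith [h0]
      have hd2 := discrim_le_zero hq
      rw [discrim] at hd2
      nlinarith [hd2]
    have hMpsd : M.PosSemidef := by
      refine Matrix.PosSemidef.of_dotProduct_mulVec_nonneg ?_ ?_
      · refine Matrix.ext fun i j => ?_
        simp only [Matrix.conjTranspose_apply, star_trivial]
        rw [hMe i j, hMe j i, hCe j i]
        ring
      · intro x
        rw [hstar, hMquad x]
        have h1 := hCS x
        have hci : (0:ℝ) < c⁻¹ := inv_pos.2 hc0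
        nlinarith [h1, hc0, mul_inv_cancel₀ hc0.ne']
    obtain ⟨B, hBpsd, hBB'⟩ := exists_sqrt_psd M hMpsd
    have hBe : ∀ i j, B i j = B j i := fun i j => by
      have := hBpsd.1.apply i j
      simpa using this.symm
    have hBB : B * B = M := hBB'
    have hMw : dotProduct w (M.mulVec w) = 0 := by
      rw [hMquad w, ← hCwdef, ← hcdef]
      field_simp
      ring
    have hg0 : ∀ k, B.mulVec w k = 0 := by
      have hkey : dotProduct w (M.mulVec w) = ∑ k, (B.mulVec w k) ^ 2 := by
        have h1 : M.mulVec w = B.mulVec (B.mulVec w) := by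
          rw [← hBB, ← Matrix.mulVec_mulVec]
        rw [h1, dot_symm hBe w (B.mulVec w)]
        simp only [dotProduct]
        exact Finset.sum_congr rfl fun k _ => (sq (B.mulVec w k)) ▸ by ring
      have h0 : ∑ k, (B.mulVec w k) ^ 2 = 0 := by rw [← hkey, hMw]
      intro k
      have h2 := (Finset.sum_eq_zero_iff_of_nonneg
        (fun j _ => sq_nonneg (B.mulVec w j))).1 h0 k (Finset.mem_univ k)
      exact (pow_eq_zero_iff two_ne_zero).mp h2
    have hBw : ∀ k, ∑ i, B k i * w i = 0 := fun k => by
      have := hg0 k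
      simpa [Matrix.mulVec, dotProduct] using this
    set vv : Fin d → ℝ := fun i => Cw i / c with hvvdef
    have hwv : ∑ i, w i * vv i = 1 := by
      rw [Finset.sum_congr rfl fun i _ => show w i * vv i = w i * Cw i / c from by
        rw [hvvdef]; ring]
      rw [← Finset.sum_div]
      rw [show ∑ i, w i * Cw i = c from rfl]
      exact div_self hc0.ne'
    set Tp := Tmap B vv μ m with hTdef
    have hT : ∀ p, Measurable (Tp p) := fun p => measurable_Tmap B vv μ m p
    set D : ℝ≥0∞ := ((2 * d : ℕ) : ℝ≥0∞) with hDdef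
    have hDnz : D ≠ 0 := by
      simp only [hDdef, ne_eq, Nat.cast_eq_zero]
      omega
    have hDnt : D ≠ ⊤ := by rw [hDdef]; exact ENNReal.natCast_ne_top _
    set G : Measure (Fin d → ℝ) := D⁻¹ • ∑ p : Fin d × Bool, Measure.map (Tp p) F with hGdef
    have hcard : ((Fintype.card (Fin d × Bool) : ℕ) : ℝ≥0∞) = D := by
      rw [Fintype.card_prod, Fintype.card_bool, Fintype.card_fin, hDdef, Nat.mul_comm]
    have hGp : IsProbabilityMeasure G := by
      constructor
      rw [hGdef, Measure.smul_apply, Measure.finset_sum_apply]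
      rw [Finset.sum_congr rfl fun p _ => show Measure.map (Tp p) F Set.univ = 1 from by
        rw [Measure.map_apply (hT p) MeasurableSet.univ, Set.preimage_univ, measure_univ]]
      rw [Finset.sum_const, Finset.card_univ, nsmul_eq_mul, mul_one, smul_eq_mul, hcard,
        ENNReal.inv_mul_cancel hDnz hDnt]
    have hIu : Integrable (fun y : ℝ => y - m) F := hF1.sub (integrable_const m)
    have hIu2 : Integrable (fun y : ℝ => (y - m) ^ 2) F := by
      have e : (fun y : ℝ => (y - m) ^ 2) = fun y => y ^ 2 + ((-2 * m) * y + m ^ 2) :=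
        funext fun y => by ring
      rw [e]
      exact hFint2.add ((hF1.const_mul _).add (integrable_const _))
    have huint0 : ∫ y, (y - m) ∂F = 0 := by
      rw [integral_sub hF1 (integrable_const m), integral_const, hFmean]
      simp
    have haffI : ∀ a b : ℝ, Integrable (fun y => a + b * (y - m)) F := fun a b =>
      (integrable_const a).add (hIu.const_mul b)
    have haffc : ∀ a b : ℝ, ∫ y, (a + b * (y - m)) ∂F = a := by
      intro a b
      rw [integral_add (integrable_const a) (hIu.const_mul b), integral_const,
        integral_const_mul, huint0]
      simp
    have hprodI : ∀ a b a' b' : ℝ,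
        Integrable (fun y => (a + b * (y - m)) * (a' + b' * (y - m))) F := by
      intro a b a' b'
      have e : (fun y : ℝ => (a + b * (y - m)) * (a' + b' * (y - m)))
          = fun y => (a * a' + (a * b' + a' * b) * (y - m)) + (b * b') * (y - m) ^ 2 :=
        funext fun y => by ring
      rw [e]
      exact (haffI _ _).add (hIu2.const_mul _)
    have hprodF : ∀ a b a' b' : ℝ,
        ∫ y, (a + b * (y - m)) * (a' + b' * (y - m)) ∂F = a * a' + b * b' * c := by
      intro a b a' b'
      have e : (fun y : ℝ => (a + b * (y - m)) * (a' + b' * (y - m)))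
          = fun y => (a * a' + (a * b' + a' * b) * (y - m)) + (b * b') * (y - m) ^ 2 :=
        funext fun y => by ring
      rw [e, integral_add (haffI _ _) (hIu2.const_mul _), haffc, integral_const_mul, hFvar]
    have hIG : ∀ f : (Fin d → ℝ) → ℝ, Measurable f →
        (∀ p : Fin d × Bool, Integrable (fun y => f (Tp p y)) F) →
        Integrable f G ∧
          ∫ x, f x ∂G = (2 * (d : ℝ))⁻¹ * ∑ p : Fin d × Bool, ∫ y, f (Tp p y) ∂F := by
      intro f hf hfi
      have h1 : ∀ p : Fin d × Bool, Integrable f (Measure.map (Tp p) F) := fun p =>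
        (integrable_map_measure hf.aestronglyMeasurable (hT p).aemeasurable).2 (hfi p)
      have h2 : Integrable f (∑ p : Fin d × Bool, Measure.map (Tp p) F) :=
        integrable_finset_sum_measure.2 fun p _ => h1 p
      refine ⟨h2.smul_measure (ENNReal.inv_ne_top.2 hDnz), ?_⟩
      rw [hGdef, integral_smul_measure, integral_finset_sum_measure fun p _ => h1 p,
        smul_eq_mul]
      congr 1
      · rw [hDdef, ENNReal.toReal_inv, ENNReal.toReal_natCast]
        push_cast
        ring
      · exact Finset.sum_congr rfl fun p _ =>
          integral_map (hT p).aemeasurable hf.aestronglyMeasurable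
    refine ⟨G, hGp, ?_, ⟨μ, ?_⟩, ?_, ?_, ?_⟩
    · have hf1m : Measurable fun x : Fin d → ℝ => ∑ i, (x i) ^ 2 := by fun_prop
      have hint1 : ∀ p : Fin d × Bool, Integrable (fun y => ∑ i, (Tp p y i) ^ 2) F := by
        intro p
        refine integrable_finset_sum _ fun i _ => ?_
        have e : (fun y => (Tp p y i) ^ 2)
            = fun y => ((sgn p.2 * Real.sqrt d * B p.1 i + μ i) + vv i * (y - m))
              * ((sgn p.2 * Real.sqrt d * B p.1 i + μ i) + vv i * (y - m)) :=
          funext fun y => by simp only [hTdef, Tmap]; ring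
        rw [e]
        exact hprodI _ _ _ _
      exact (hIG _ hf1m hint1).1
    · have hR : Measurable fun x : Fin d → ℝ => (2 : ℝ) • μ - x := by fun_prop
      have hσ : Measurable fun y : ℝ => 2 * m - y := by fun_prop
      have hflip : ∀ p : Fin d × Bool,
          Measure.map (fun x : Fin d → ℝ => (2 : ℝ) • μ - x) (Measure.map (Tp p) F)
            = Measure.map (Tp (p.1, !p.2)) F := by
        rintro ⟨k, b⟩
        rw [Measure.map_map hR (hT _)]
        have e : (fun x : Fin d → ℝ => (2 : ℝ) • μ - x) ∘ Tp (k, b)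
            = Tp (k, !b) ∘ fun y => 2 * m - y := by
          funext y
          funext i
          simp only [Function.comp_apply, hTdef, Tmap, Pi.sub_apply, Pi.smul_apply,
            smul_eq_mul]
          cases b <;> simp [sgn] <;> ring
        rw [e, ← Measure.map_map (hT _) hσ, hFsym]
      rw [hGdef, Measure.map_smul, map_finset_sum _ _ hR,
        Finset.sum_congr rfl fun p _ => hflip p]
      congr 1
      rw [Fintype.sum_prod_type, Fintype.sum_prod_type]
      refine Finset.sum_congr rfl fun k _ => ?_
      rw [Fintype.sum_bool, Fintype.sum_bool]
      simp only [Bool.not_true, Bool.not_false]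
      exact add_comm _ _
    · intro i
      have hfm : Measurable fun x : Fin d → ℝ => x i := measurable_pi_apply i
      have eI : ∀ p : Fin d × Bool, (fun y => Tp p y i)
          = fun y => (sgn p.2 * Real.sqrt d * B p.1 i + μ i) + vv i * (y - m) := fun p =>
        funext fun y => by simp only [hTdef, Tmap]; ring
      have hint : ∀ p : Fin d × Bool, Integrable (fun y => Tp p y i) F := fun p => by
        rw [eI p]; exact haffI _ _
      refine ((hIG (fun x => x i) hfm hint).2).trans ?_
      beta_reduce
      have hval : ∀ p : Fin d × Bool,
          ∫ y, Tp p y i ∂F = sgn p.2 * Real.sqrt d * B p.1 i + μ i := fun p => by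
        rw [eI p, haffc]
      rw [Finset.sum_congr rfl fun p _ => hval p, Fintype.sum_prod_type]
      have h2 : ∀ k : Fin d,
          (∑ b : Bool, (sgn (k, b).2 * Real.sqrt d * B (k, b).1 i + μ i)) = 2 * μ i := by
        intro k
        rw [Fintype.sum_bool]
        simp only [sgn]
        norm_num
        ring
      rw [Finset.sum_congr rfl fun k _ => h2 k, Finset.sum_const, Finset.card_univ,
        Fintype.card_fin, nsmul_eq_mul]
      field_simp
    · intro i j
      have hfm : Measurable fun x : Fin d → ℝ => (x i - μ i) * (x j - μ j) := by fun_prop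
      have hss : Real.sqrt d * Real.sqrt d = (d : ℝ) := Real.mul_self_sqrt (Nat.cast_nonneg d)
      have eI : ∀ p : Fin d × Bool, (fun y => (Tp p y i - μ i) * (Tp p y j - μ j))
          = fun y => (sgn p.2 * Real.sqrt d * B p.1 i + vv i * (y - m))
            * (sgn p.2 * Real.sqrt d * B p.1 j + vv j * (y - m)) := fun p =>
        funext fun y => by simp only [hTdef, Tmap]; ring
      have hint : ∀ p : Fin d × Bool,
          Integrable (fun y => (Tp p y i - μ i) * (Tp p y j - μ j)) F := fun p => by
        rw [eI p]; exact hprodI _ _ _ _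
      refine ((hIG (fun x => (x i - μ i) * (x j - μ j)) hfm hint).2).trans ?_
      beta_reduce
      have hval : ∀ p : Fin d × Bool, ∫ y, (Tp p y i - μ i) * (Tp p y j - μ j) ∂F
          = (d : ℝ) * (B p.1 i * B p.1 j) + vv i * vv j * c := by
        rintro ⟨k, b⟩
        rw [eI _, hprodF]
        cases b <;> simp only [sgn, Bool.cond_true, Bool.cond_false] <;>
          linear_combination (B k i * B k j) * hss
      rw [Finset.sum_congr rfl fun p _ => hval p, Fintype.sum_prod_type]
      have h2 : ∀ k : Fin d,
          (∑ b : Bool, ((d : ℝ) * (B (k, b).1 i * B (k, b).1 j) + vv i * vv j * c))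
            = 2 * ((d : ℝ) * (B k i * B k j) + vv i * vv j * c) := fun k => by
        rw [Fintype.sum_bool]
        ring
      rw [Finset.sum_congr rfl fun k _ => h2 k]
      have hMij : ∑ k, B k i * B k j = M i j := by
        have h3 : M i j = (B * B) i j := by rw [hBB]
        rw [h3, Matrix.mul_apply]
        exact Finset.sum_congr rfl fun k _ => by rw [hBe k i]
      have hsum : ∑ k : Fin d, (2 * ((d : ℝ) * (B k i * B k j) + vv i * vv j * c))
          = 2 * (d : ℝ) * (M i j + vv i * vv j * c) := by
        calc ∑ k : Fin d, (2 * ((d : ℝ) * (B k i * B k j) + vv i * vv j * c))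
            = ∑ k : Fin d, (2 * (d : ℝ) * (B k i * B k j) + 2 * (vv i * vv j * c)) :=
              Finset.sum_congr rfl fun k _ => by ring
          _ = 2 * (d : ℝ) * (∑ k, B k i * B k j) + (d : ℝ) * (2 * (vv i * vv j * c)) := by
              rw [Finset.sum_add_distrib, ← Finset.mul_sum, Finset.sum_const,
                Finset.card_univ, Fintype.card_fin, nsmul_eq_mul]
          _ = 2 * (d : ℝ) * (M i j + vv i * vv j * c) := by rw [hMij]; ring
      rw [hsum, inv_mul_cancel_left₀ (by positivity : (2 * (d : ℝ)) ≠ 0)]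
      rw [hMe i j]
      simp only [hvvdef]
      field_simp
      ring
    · have hL : Measurable fun x : Fin d → ℝ => ∑ i, w i * x i := by fun_prop
      have hLT : ∀ p : Fin d × Bool,
          (fun x : Fin d → ℝ => ∑ i, w i * x i) ∘ Tp p = id := by
        intro p
        funext y
        simp only [Function.comp_apply, hTdef, Tmap, id_eq]
        rw [Finset.sum_congr rfl fun i _ => show
          w i * (sgn p.2 * Real.sqrt d * B p.1 i + (y - m) * vv i + μ i)
            = sgn p.2 * Real.sqrt d * (B p.1 i * w i) + (y - m) * (w i * vv i) + w i * μ i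
          from by ring]
        rw [Finset.sum_add_distrib, Finset.sum_add_distrib, ← Finset.mul_sum, ← Finset.mul_sum,
          hBw p.1, hwv, ← hmdef]
        ring
      have hfin : Measure.map (fun x : Fin d → ℝ => ∑ i, w i * x i) G = F := by
        rw [hGdef, Measure.map_smul, map_finset_sum _ _ hL,
          Finset.sum_congr rfl fun p _ => by
            rw [Measure.map_map hL (hT p), hLT p, Measure.map_id],
          Finset.sum_const, Finset.card_univ]
        ext s hs
        rw [Measure.smul_apply, Measure.smul_apply, nsmul_eq_mul, smul_eq_mul, ← mul_assoc,
          hcard, ENNReal.inv_mul_cancel hDnz hDnt, one_mul]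
      exact hfin.symm
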